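/- Let v, w be positive integers with w ∣ v, v ∣ w², and w ≤ v, and set λ_c = w²/v. Define subsets of Z_v by X = {0, 1, …, w − 1} and Y = {δ·w + j : 0 ≤ δ ≤ v/w − 1, 0 ≤ j ≤ λ_c − 1}. Then |X| = |Y| = w and for every s ∈ Z_v, |X ∩ (Y + s)| ≤ λ_c. Hence {X, Y} is a (v, w, w, w²/v)-OOC meeting the lower bound λ_c = w²/v on the cross-correlation value. -/

import Mathlib

theorem stmt_5 {v w : ℕ} (hw : 0 < w) (hwv : w ∣ v) (hvw : v ∣ w ^ 2) (hle : w ≤ v) :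
    ((Finset.range w).image (fun k : ℕ => (k : ZMod v))).card = w ∧
    (((Finset.range (v / w)) ×ˢ (Finset.range (w ^ 2 / v))).image
        (fun p => ((p.1 * w + p.2 : ℕ) : ZMod v))).card = w ∧
    ∀ s : ZMod v,
      (((Finset.range w).image (fun k : ℕ => (k : ZMod v))) ∩
        ((((Finset.range (v / w)) ×ˢ (Finset.range (w ^ 2 / v))).image
          (fun p => ((p.1 * w + p.2 : ℕ) : ZMod v))).image (· + s))).card ≤ w ^ 2 / v := by
  have hv : 0 < v := lt_of_lt_of_le hw hle
  haveI : NeZero v := ⟨by omega⟩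
  set lam := w ^ 2 / v with hlam
  set m := v / w with hm
  have hmv : m * w = v := Nat.div_mul_cancel hwv
  have hlamv : v * lam = w ^ 2 := Nat.mul_div_cancel' hvw
  have hml : m * lam = w := by
    have h : w * (m * lam) = w * w := by
      calc w * (m * lam) = (m * w) * lam := by ring
        _ = v * lam := by rw [hmv]
        _ = w ^ 2 := hlamv
        _ = w * w := by ring
    exact Nat.eq_of_mul_eq_mul_left hw h
  have hm1 : 1 ≤ m := (Nat.one_le_div_iff hw).mpr hle
  have hlamw : lam ≤ w := by
    calc lam ≤ m * lam := Nat.le_mul_of_pos_left _ hm1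
      _ = w := hml
  have hbound : ∀ a b : ℕ, a < m → b < lam → a * w + b < v := by
    intro a b ha hb
    calc a * w + b < a * w + w := by omega
      _ = (a + 1) * w := by ring
      _ ≤ m * w := Nat.mul_le_mul_right w ha
      _ = v := hmv
  have h1 : ((Finset.range w).image (fun k : ℕ => (k : ZMod v))).card = w := by
    rw [Finset.card_image_of_injOn, Finset.card_range]
    intro a ha b hb hab
    simp only [Finset.mem_coe, Finset.mem_range] at ha hb
    have ha' := ZMod.val_cast_of_lt (show a < v by omega)
    have hb' := ZMod.val_cast_of_lt (show b < v by omega)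
    rw [← ha', ← hb']
    exact congrArg ZMod.val hab
  have h2 : (((Finset.range m) ×ˢ (Finset.range lam)).image
      (fun p => ((p.1 * w + p.2 : ℕ) : ZMod v))).card = w := by
    rw [Finset.card_image_of_injOn]
    · rw [Finset.card_product, Finset.card_range, Finset.card_range, hml]
    · rintro ⟨a, b⟩ hab ⟨c, d⟩ hcd h
      simp only [Finset.mem_coe, Finset.mem_product, Finset.mem_range] at hab hcd
      have hn1 : a * w + b < v := hbound a b hab.1 hab.2
      have hn2 : c * w + d < v := hbound c d hcd.1 hcd.2
      have heq : a * w + b = c * w + d := by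
        have h1' := ZMod.val_cast_of_lt hn1
        have h2' := ZMod.val_cast_of_lt hn2
        rw [← h1', ← h2']
        exact congrArg ZMod.val h
      have hac : a = c := by
        have e1 : (a * w + b) / w = a := by
          rw [mul_comm, Nat.mul_add_div hw, Nat.div_eq_of_lt (by omega)]
          omega
        have e2 : (c * w + d) / w = c := by
          rw [mul_comm, Nat.mul_add_div hw, Nat.div_eq_of_lt (by omega)]
          omega
        rw [← e1, ← e2, heq]
      subst hac
      have : b = d := by
        have := Nat.add_left_cancel heq
        exact this
      simp [this]
  refine ⟨h1, h2, ?_⟩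
  intro s
  classical
  refine le_trans (Finset.card_le_card_of_injOn (t := Finset.range lam)
    (fun z => (z - s).val % w) ?_ ?_) (le_of_eq (Finset.card_range lam))
  · -- maps into range lam
    intro z hz
    simp only [Finset.mem_coe, Finset.mem_inter, Finset.mem_image] at hz
    obtain ⟨hzX, y, hy, hys⟩ := hz
    obtain ⟨p, hp, hpy⟩ := hy
    simp only [Finset.mem_product, Finset.mem_range] at hp
    have hn : p.1 * w + p.2 < v := hbound p.1 p.2 hp.1 hp.2
    have hval : (z - s).val = p.1 * w + p.2 := by
      have : z - s = ((p.1 * w + p.2 : ℕ) : ZMod v) := by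
        rw [← hys, ← hpy]; ring
      rw [this, ZMod.val_cast_of_lt hn]
    show (z - s).val % w ∈ Finset.range lam
    rw [Finset.mem_range, hval, add_comm, Nat.add_mul_mod_self_right]
    rw [Nat.mod_eq_of_lt (by omega)]
    exact hp.2
  · -- injective on the intersection
    intro z1 hz1 z2 hz2 hf
    simp only [Finset.mem_coe, Finset.mem_inter, Finset.mem_image, Finset.mem_range] at hz1 hz2
    obtain ⟨⟨x1, hx1, hx1z⟩, y1, hy1, hy1s⟩ := hz1
    obtain ⟨⟨x2, hx2, hx2z⟩, y2, hy2, hy2s⟩ := hz2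
    obtain ⟨p1, hp1, hp1y⟩ := hy1
    obtain ⟨p2, hp2, hp2y⟩ := hy2
    simp only [Finset.mem_product, Finset.mem_range] at hp1 hp2
    have hn1 : p1.1 * w + p1.2 < v := hbound p1.1 p1.2 hp1.1 hp1.2
    have hn2 : p2.1 * w + p2.2 < v := hbound p2.1 p2.2 hp2.1 hp2.2
    have hval1 : (z1 - s).val = p1.1 * w + p1.2 := by
      have : z1 - s = ((p1.1 * w + p1.2 : ℕ) : ZMod v) := by
        rw [← hy1s, ← hp1y]; ring
      rw [this, ZMod.val_cast_of_lt hn1]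
    have hval2 : (z2 - s).val = p2.1 * w + p2.2 := by
      have : z2 - s = ((p2.1 * w + p2.2 : ℕ) : ZMod v) := by
        rw [← hy2s, ← hp2y]; ring
      rw [this, ZMod.val_cast_of_lt hn2]
    -- f z_i = p_i.2
    have hfz1 : (z1 - s).val % w = p1.2 := by
      rw [hval1, add_comm, Nat.add_mul_mod_self_right, Nat.mod_eq_of_lt (by have := hp1.2; omega)]
    have hfz2 : (z2 - s).val % w = p2.2 := by
      rw [hval2, add_comm, Nat.add_mul_mod_self_right, Nat.mod_eq_of_lt (by have := hp2.2; omega)]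
    have hj : p1.2 = p2.2 := by
      have hf' : (z1 - s).val % w = (z2 - s).val % w := hf
      rw [hfz1, hfz2] at hf'
      exact hf'
    -- cast equation
    have hcast : ((x1 + (p2.1 * w + p2.2) : ℕ) : ZMod v)
        = ((x2 + (p1.1 * w + p1.2) : ℕ) : ZMod v) := by
      push_cast
      have e1 : (x1 : ZMod v) = z1 := hx1z
      have e2 : (x2 : ZMod v) = z2 := hx2z
      have e3 : ((p1.1 * w + p1.2 : ℕ) : ZMod v) = z1 - s := by
        rw [← hy1s, ← hp1y]; ring
      have e4 : ((p2.1 * w + p2.2 : ℕ) : ZMod v) = z2 - s := by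
        rw [← hy2s, ← hp2y]; ring
      push_cast at e3 e4
      rw [e1, e2, e3, e4]; ring
    have hmod : (v : ℤ) ∣ ((x2 + (p1.1 * w + p1.2) : ℕ) : ℤ)
        - ((x1 + (p2.1 * w + p2.2) : ℕ) : ℤ) :=
      ((ZMod.natCast_eq_natCast_iff _ _ _).mp hcast).dvd
    have hwdvd : (w : ℤ) ∣ (x2 : ℤ) - x1 := by
      have hd1 : (w : ℤ) ∣ ((x2 + (p1.1 * w + p1.2) : ℕ) : ℤ)
          - ((x1 + (p2.1 * w + p2.2) : ℕ) : ℤ) :=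
        dvd_trans (Int.natCast_dvd_natCast.mpr hwv) hmod
      have hd2 : (w : ℤ) ∣ ((p1.1 * w + p1.2 : ℕ) : ℤ) - ((p2.1 * w + p2.2 : ℕ) : ℤ) := by
        refine ⟨(p1.1 : ℤ) - p2.1, ?_⟩
        push_cast
        rw [hj]; ring
      have := dvd_sub hd1 hd2
      have heq : ((x2 + (p1.1 * w + p1.2) : ℕ) : ℤ) - ((x1 + (p2.1 * w + p2.2) : ℕ) : ℤ)
          - (((p1.1 * w + p1.2 : ℕ) : ℤ) - ((p2.1 * w + p2.2 : ℕ) : ℤ))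
          = (x2 : ℤ) - x1 := by push_cast; ring
      rwa [heq] at this
    have hx : x1 = x2 := by
      have h0 : (x2 : ℤ) - x1 = 0 := by
        refine Int.eq_zero_of_abs_lt_dvd hwdvd ?_
        rw [abs_lt]
        constructor <;> [omega; omega]
      omega
    rw [← hx1z, ← hx2z, hx]
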